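/- Let Q be symmetric positive definite and {H_k} a sequence of symmetric positive definite matrices. Define d_k = −H_k g_k for vectors g_k ≠ 0, and α_k = ⟨H_k^{-1} d_k, d_k⟩ / ⟨d_k, Q d_k⟩. If ‖(H_k^{-1} − Q) d_k‖ / ‖d_k‖ → 0 as k → ∞, then α_k → 1. -/

import Mathlib

open Matrix Filter

/-- The Euclidean norm of a vector in `Fin n → ℝ`. -/
noncomputable def enorm' {n : ℕ} (v : Fin n → ℝ) : ℝ := Real.sqrt (v ⬝ᵥ v)

lemma posdef_lower_bound {n : ℕ} (Q : Matrix (Fin n) (Fin n) ℝ) (hQ : Q.PosDef) :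
    ∃ c > 0, ∀ v : Fin n → ℝ, c * (v ⬝ᵥ v) ≤ v ⬝ᵥ Q *ᵥ v := by
  rcases Nat.eq_zero_or_pos n with h0 | hn
  · refine ⟨1, one_pos, fun v => ?_⟩
    subst h0
    have hv : v = 0 := Subsingleton.elim v 0
    simp [hv]
  · haveI : Nontrivial (EuclideanSpace ℝ (Fin n)) :=
      ⟨0, WithLp.toLp 2 (fun _ => (1:ℝ)), fun h => by
        have := congrFun (congrArg WithLp.ofLp h) ⟨0, hn⟩; norm_num at this⟩
    set f : EuclideanSpace ℝ (Fin n) → ℝ := fun v => (v : Fin n → ℝ) ⬝ᵥ Q *ᵥ (v : Fin n → ℝ) with hf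
    have hcont : Continuous f := by
      have h2 : Continuous (fun w : Fin n → ℝ => w ⬝ᵥ Q *ᵥ w) := by
        simp only [dotProduct, mulVec]
        apply continuous_finset_sum
        intro i _
        apply Continuous.mul (continuous_apply i)
        apply continuous_finset_sum
        intro j _
        exact (continuous_const.mul (continuous_apply j))
      exact h2.comp (PiLp.continuousLinearEquiv 2 ℝ (fun _ : Fin n => ℝ)).continuous
    have hcompact : IsCompact (Metric.sphere (0 : EuclideanSpace ℝ (Fin n)) 1) :=
      isCompact_sphere _ _
    have hne : (Metric.sphere (0 : EuclideanSpace ℝ (Fin n)) 1).Nonempty :=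
      NormedSpace.sphere_nonempty.mpr (by norm_num)
    obtain ⟨x₀, hx₀, hmin⟩ := hcompact.exists_isMinOn hne hcont.continuousOn
    have hx₀ne : x₀ ≠ 0 := by
      intro h; rw [h] at hx₀; simp at hx₀
    have hc : 0 < f x₀ := by
      have := hQ.re_dotProduct_pos (x := (x₀ : Fin n → ℝ)) (fun h => hx₀ne (by simpa using congrArg (WithLp.toLp 2) h))
      simpa [hf] using this
    refine ⟨f x₀, hc, fun v => ?_⟩
    by_cases hv : v = 0
    · simp [hv]
    · set V : EuclideanSpace ℝ (Fin n) := WithLp.toLp 2 v with hV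
      have hvn : (0:ℝ) < ‖V‖ := norm_pos_iff.mpr (show V ≠ 0 from fun h => hv (by simpa [hV] using congrArg WithLp.ofLp h))
      set u : EuclideanSpace ℝ (Fin n) := ‖V‖⁻¹ • V with hu
      have husphere : u ∈ Metric.sphere (0 : EuclideanSpace ℝ (Fin n)) 1 := by
        simp only [Metric.mem_sphere, dist_zero_right, hu, norm_smul, norm_inv, norm_norm]
        exact inv_mul_cancel₀ hvn.ne'
      have hmin' : f x₀ ≤ f u := hmin husphere
      have hfu : f u = ‖V‖⁻¹ ^ 2 * f V := by
        show (u : Fin n → ℝ) ⬝ᵥ Q *ᵥ (u : Fin n → ℝ) = _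
        rw [show (u : Fin n → ℝ) = ‖V‖⁻¹ • v from rfl, smul_dotProduct, mulVec_smul,
          dotProduct_smul]
        show _ = _ * (v ⬝ᵥ Q *ᵥ v)
        simp [smul_eq_mul]
        ring
      have hnorm_sq : ‖V‖ ^ 2 = v ⬝ᵥ v := by
        rw [EuclideanSpace.norm_eq, Real.sq_sqrt (by positivity)]
        simp [dotProduct, sq_abs, sq, hV]
      rw [hfu] at hmin'
      have h2 := mul_le_mul_of_nonneg_left hmin' (sq_nonneg ‖V‖)
      rw [← mul_assoc, ← mul_pow, mul_inv_cancel₀ hvn.ne', one_pow, one_mul] at h2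
      calc f x₀ * (v ⬝ᵥ v) = ‖V‖ ^ 2 * f x₀ := by rw [hnorm_sq]; ring
        _ ≤ f V := h2
        _ = v ⬝ᵥ Q *ᵥ v := rfl

lemma enorm'_eq_norm {n : ℕ} (v : Fin n → ℝ) :
    enorm' v = ‖(WithLp.equiv 2 (Fin n → ℝ)).symm v‖ := by
  rw [EuclideanSpace.norm_eq]
  unfold enorm'
  congr 1
  simp [dotProduct, sq_abs, sq]

lemma enorm'_nonneg {n : ℕ} (v : Fin n → ℝ) : 0 ≤ enorm' v := Real.sqrt_nonneg _

lemma abs_dot_le {n : ℕ} (x y : Fin n → ℝ) : |x ⬝ᵥ y| ≤ enorm' x * enorm' y := by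
  rw [enorm'_eq_norm, enorm'_eq_norm]
  have := abs_real_inner_le_norm ((WithLp.equiv 2 (Fin n → ℝ)).symm x)
    ((WithLp.equiv 2 (Fin n → ℝ)).symm y)
  simpa [PiLp.inner_apply, dotProduct, mul_comm] using this

lemma enorm'_pos {n : ℕ} {v : Fin n → ℝ} (hv : v ≠ 0) : 0 < enorm' v := by
  rw [enorm'_eq_norm]
  apply norm_pos_iff.mpr
  simpa using hv

lemma dot_self_nonneg {n : ℕ} (v : Fin n → ℝ) : (0:ℝ) ≤ v ⬝ᵥ v :=
  Finset.sum_nonneg (fun i _ => mul_self_nonneg (v i))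

lemma enorm'_sq {n : ℕ} (v : Fin n → ℝ) : enorm' v ^ 2 = v ⬝ᵥ v :=
  Real.sq_sqrt (dot_self_nonneg v)

theorem steplength_tendsto_one {n : ℕ}
    (Q : Matrix (Fin n) (Fin n) ℝ) (hQ : Q.PosDef)
    (H : ℕ → Matrix (Fin n) (Fin n) ℝ) (hH : ∀ k, (H k).PosDef)
    (g : ℕ → Fin n → ℝ) (hg : ∀ k, g k ≠ 0)
    (d : ℕ → Fin n → ℝ) (hd : ∀ k, d k = -((H k) *ᵥ g k))
    (α : ℕ → ℝ)
    (hα : ∀ k, α k = ((H k)⁻¹ *ᵥ d k) ⬝ᵥ d k / (d k ⬝ᵥ Q *ᵥ d k))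
    (happrox : Tendsto (fun k => enorm' (((H k)⁻¹ - Q) *ᵥ d k) / enorm' (d k))
      atTop (nhds 0)) :
    Tendsto α atTop (nhds 1) := by
  obtain ⟨c, hc, hlow⟩ := posdef_lower_bound Q hQ
  have hdk : ∀ k, d k ≠ 0 := by
    intro k hzero
    apply hg k
    have h1 : H k *ᵥ g k = 0 := by
      have := hd k; rw [hzero] at this
      have := congrArg Neg.neg this
      simpa using this.symm
    have h2 : (H k)⁻¹ *ᵥ (H k *ᵥ g k) = g k := by
      rw [Matrix.mulVec_mulVec, Matrix.nonsing_inv_mul _ (isUnit_iff_ne_zero.mpr (hH k).det_pos.ne'),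
        Matrix.one_mulVec]
    rw [h1] at h2
    simpa using h2.symm
  have hQd : ∀ k, 0 < d k ⬝ᵥ Q *ᵥ d k := fun k => by
    simpa using hQ.re_dotProduct_pos (hdk k)
  have key : ∀ k, |α k - 1| ≤ c⁻¹ * (enorm' (((H k)⁻¹ - Q) *ᵥ d k) / enorm' (d k)) := by
    intro k
    set u := ((H k)⁻¹ - Q) *ᵥ d k with hu
    have hdiff : α k - 1 = (u ⬝ᵥ d k) / (d k ⬝ᵥ Q *ᵥ d k) := by
      rw [hα k, div_sub_one (hQd k).ne', hu, Matrix.sub_mulVec, sub_dotProduct,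
        dotProduct_comm (Q *ᵥ d k) (d k)]
    have hden : 0 < c * enorm' (d k) ^ 2 := by
      apply mul_pos hc
      exact pow_pos (enorm'_pos (hdk k)) 2
    have hden_le : c * enorm' (d k) ^ 2 ≤ d k ⬝ᵥ Q *ᵥ d k := by
      rw [enorm'_sq]; exact hlow (d k)
    have hnum : |u ⬝ᵥ d k| ≤ enorm' u * enorm' (d k) := abs_dot_le u (d k)
    have h1 : |α k - 1| ≤ (enorm' u * enorm' (d k)) / (c * enorm' (d k) ^ 2) := by
      rw [hdiff, abs_div, abs_of_pos (hQd k)]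
      exact div_le_div₀ (mul_nonneg (enorm'_nonneg _) (enorm'_nonneg _)) hnum hden hden_le
    refine h1.trans (le_of_eq ?_)
    have hne : enorm' (d k) ≠ 0 := (enorm'_pos (hdk k)).ne'
    field_simp
  have hbound : Tendsto (fun k => c⁻¹ * (enorm' (((H k)⁻¹ - Q) *ᵥ d k) / enorm' (d k)))
      atTop (nhds 0) := by
    simpa using happrox.const_mul c⁻¹
  have hsq : Tendsto (fun k => α k - 1) atTop (nhds 0) :=
    squeeze_zero_norm (fun k => by simpa [Real.norm_eq_abs] using key k) hbound
  have := hsq.add (tendsto_const_nhds (x := (1:ℝ)))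
  simpa using this
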